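/- Let G be a two-dimensional limit set whose gauge function g has piecewise-continuous partial derivatives possessing finite left and right limits, and suppose the conditional extremes setup holds with α₁ = lim a¹(t)/t and β₁ ≤ 1 defined by u ↦ g(1, α₁ + u) − 1 ∈ RV^0_{1/(1−β₁)}. Write g₂(1,(α₁)₊) = lim_{u→0⁺} (g(1, α₁ + u) − g(1, α₁))/u ≥ 0. Then: (i) β₁ ≥ 0 if g₂(1,(α₁)₊) = 0; (ii) β₁ = 0 if 0 < g₂(1,(α₁)₊) < ∞; furthermore, if α₁ > 0 then 0 ≤ g₂(1,(α₁)₊) < ∞, so that β₁ ≥ 0. Analogous statements hold for α₂, β₂. -/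

import Mathlib

open Filter Topology

/-- `f` is regularly varying at zero (from the right) with index `ρ`. -/
def RegVaryingAtZero (f : ℝ → ℝ) (ρ : ℝ) : Prop :=
  ∀ x : ℝ, 0 < x → Tendsto (fun t => f (t * x) / f t) (𝓝[>] 0) (𝓝 (x ^ ρ))

private lemma rv_index_one {f : ℝ → ℝ} {ρ c : ℝ} (hc : 0 < c)
    (hRV : RegVaryingAtZero f ρ)
    (h : Tendsto (fun u => f u / u) (𝓝[>] 0) (𝓝 c)) : ρ = 1 := by
  have hmap : Tendsto (fun t : ℝ => t * 2) (𝓝[>] (0:ℝ)) (𝓝[>] (0:ℝ)) := by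
    apply tendsto_nhdsWithin_of_tendsto_nhds_of_eventually_within
    · have : Tendsto (fun t : ℝ => t * 2) (𝓝 0) (𝓝 (0 * 2)) := tendsto_id.mul_const 2
      simpa using this.mono_left nhdsWithin_le_nhds
    · filter_upwards [self_mem_nhdsWithin] with t ht
      exact mul_pos ht (two_pos : (0:ℝ) < 2)
  have h2 : Tendsto (fun t : ℝ => f (t * 2) / (t * 2)) (𝓝[>] 0) (𝓝 c) := h.comp hmap
  have hpos : ∀ᶠ t in 𝓝[>] (0:ℝ), 0 < f t := by
    filter_upwards [self_mem_nhdsWithin, h.eventually (eventually_gt_nhds hc)]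
      with t ht hft
    rcases div_pos_iff.mp hft with ⟨h1, _⟩ | ⟨_, h2⟩
    · exact h1
    · exact absurd ht (not_lt.mpr h2.le)
  have key : Tendsto (fun t : ℝ => f (t * 2) / f t) (𝓝[>] 0) (𝓝 2) := by
    have hT : Tendsto (fun t : ℝ => (f (t * 2) / (t * 2)) / (f t / t) * 2)
        (𝓝[>] 0) (𝓝 (c / c * 2)) := (h2.div h hc.ne').mul_const 2
    rw [div_self hc.ne', one_mul] at hT
    refine hT.congr' ?_
    filter_upwards [self_mem_nhdsWithin, hpos] with t ht hft
    have h1 : t ≠ 0 := ne_of_gt ht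
    have h2' : f t ≠ 0 := ne_of_gt hft
    field_simp
  have huniq : (2:ℝ) ^ ρ = 2 := tendsto_nhds_unique (hRV 2 two_pos) key
  have hlog : ρ * Real.log 2 = Real.log 2 := by
    have := congrArg Real.log huniq
    rwa [Real.log_rpow two_pos] at this
  have hl2 : (0:ℝ) < Real.log 2 := Real.log_pos (by norm_num)
  nlinarith

private lemma rv_not_lt_one {f : ℝ → ℝ} {ρ : ℝ}
    (hf : ∀ᶠ u in 𝓝[>] (0:ℝ), 0 ≤ f u)
    (hρ0 : 0 < ρ) (hρ1 : ρ < 1)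
    (hRV : RegVaryingAtZero f ρ)
    (h : Tendsto (fun u => f u / u) (𝓝[>] 0) (𝓝 0)) : False := by
  have hpos : ∀ᶠ t in 𝓝[>] (0:ℝ), 0 < f t := by
    have h2ρ : (0:ℝ) < 2 ^ ρ := Real.rpow_pos_of_pos two_pos ρ
    filter_upwards [hf, (hRV 2 two_pos).eventually (eventually_gt_nhds h2ρ)]
      with t h1 h2
    rcases h1.lt_or_eq with hlt | heq
    · exact hlt
    · rw [← heq, div_zero] at h2; linarith
  set L : ℝ := (1/2 : ℝ) ^ ρ with hL
  have hL1 : (1/2 : ℝ) < L := by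
    have := Real.rpow_lt_rpow_of_exponent_gt (by norm_num : (0:ℝ) < 1/2)
      (by norm_num : (1/2:ℝ) < 1) hρ1
    simpa [hL] using this
  set r : ℝ := (1/2 + L) / 2 with hr
  have hr1 : (1/2 : ℝ) < r := by rw [hr]; linarith
  have hrL : r < L := by rw [hr]; linarith
  have hq : (1:ℝ) < 2 * r := by linarith
  have hev : ∀ᶠ t in 𝓝[>] (0:ℝ), 0 < f t ∧ r * f t < f (t * (1/2)) := by
    filter_upwards [hpos,
      (hRV (1/2) (by norm_num)).eventually (eventually_gt_nhds hrL)] with t h1 h2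
    exact ⟨h1, (lt_div_iff₀ h1).mp h2⟩
  obtain ⟨u, hu, hsub⟩ := mem_nhdsGT_iff_exists_Ioc_subset.mp hev
  have hu0 : (0:ℝ) < u := hu
  have hPu := hsub ⟨hu0, le_refl u⟩
  have hfu : 0 < f u / u := div_pos hPu.1 hu0
  have claim : ∀ n : ℕ, (2*r)^n * (f u / u) ≤ f (u / 2^n) / (u / 2^n) := by
    intro n
    induction n with
    | zero => simp
    | succ n ih =>
      set t : ℝ := u / 2^n with ht
      have ht0 : 0 < t := by positivity
      have htu : t ≤ u := by
        rw [ht, div_le_iff₀ (by positivity)]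
        nlinarith [one_le_pow₀ (by norm_num : (1:ℝ) ≤ 2) (n := n), hu0]
      have hPt := hsub ⟨ht0, htu⟩
      have hstep : (2*r) * (f t / t) ≤ f (t * (1/2)) / (t * (1/2)) := by
        rw [le_div_iff₀ (by positivity)]
        have heq : 2*r*(f t/t)*(t*(1/2)) = r * f t := by field_simp
        rw [heq]
        exact hPt.2.le
      have hrw : u / 2^(n+1) = t * (1/2) := by rw [ht, pow_succ]; ring
      rw [hrw, pow_succ]
      calc (2*r)^n * (2*r) * (f u / u) = (2*r) * ((2*r)^n * (f u / u)) := by ring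
        _ ≤ (2*r) * (f t / t) := by
            apply mul_le_mul_of_nonneg_left ih (by linarith)
        _ ≤ f (t * (1/2)) / (t * (1/2)) := hstep
  have hseq : Tendsto (fun n : ℕ => u / 2^n) atTop (𝓝[>] (0:ℝ)) := by
    apply tendsto_nhdsWithin_of_tendsto_nhds_of_eventually_within
    · have : Tendsto (fun n : ℕ => u * (1/2:ℝ)^n) atTop (𝓝 (u * 0)) :=
        (tendsto_pow_atTop_nhds_zero_of_lt_one (by norm_num) (by norm_num)).const_mul u
      rw [mul_zero] at this
      refine this.congr fun n => ?_
      rw [one_div, inv_pow, ← div_eq_mul_inv]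
    · exact Eventually.of_forall fun n => Set.mem_Ioi.mpr (by positivity)
  have hcomp : Tendsto (fun n : ℕ => f (u / 2^n) / (u / 2^n)) atTop (𝓝 0) :=
    h.comp hseq
  have hatTop : Tendsto (fun n : ℕ => f (u / 2^n) / (u / 2^n)) atTop atTop :=
    tendsto_atTop_mono claim
      ((tendsto_pow_atTop_atTop_of_one_lt hq).atTop_mul_const hfu)
  exact not_tendsto_nhds_of_tendsto_atTop hatTop 0 hcomp

private lemma main_coord (g : ℝ × ℝ → ℝ) (α : ℝ)
    (hge : ∀ u : ℝ, 0 < u → 1 ≤ g (1, α + u))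
    (hα : g (1, α) = 1)
    (gu : ℝ × ℝ → ℝ) (hcu : ContDiffAt ℝ 1 gu (1, α))
    (hev : ∀ᶠ p : ℝ × ℝ in 𝓝 (1, α), α * p.1 ≤ p.2 → g p = gu p)
    (β : ℝ) (hβ : β ≤ 1)
    (hRV : RegVaryingAtZero (fun u => g (1, α + u) - 1) (1 / (1 - β))) :
    (Tendsto (fun u => (g (1, α + u) - g (1, α)) / u) (𝓝[>] 0) (𝓝 0) → 0 ≤ β) ∧
    (∀ c : ℝ, 0 < c →
      Tendsto (fun u => (g (1, α + u) - g (1, α)) / u) (𝓝[>] 0) (𝓝 c) → β = 0) ∧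
    (∀ c : ℝ,
      Tendsto (fun u => (g (1, α + u) - g (1, α)) / u) (𝓝[>] 0) (𝓝 c) → 0 ≤ c) ∧
    (∃ c : ℝ, 0 ≤ c ∧
      Tendsto (fun u => (g (1, α + u) - g (1, α)) / u) (𝓝[>] 0) (𝓝 c) ∧ 0 ≤ β) := by
  have hDrw : (fun u => (g (1, α + u) - g (1, α)) / u)
      = fun u => (g (1, α + u) - 1) / u := by
    funext u; rw [hα]
  have hf_nonneg : ∀ᶠ u in 𝓝[>] (0:ℝ), 0 ≤ g (1, α + u) - 1 := by
    filter_upwards [self_mem_nhdsWithin] with u hu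
    have := hge u hu
    linarith
  -- item 1
  have item1 : Tendsto (fun u => (g (1, α + u) - g (1, α)) / u) (𝓝[>] 0) (𝓝 0)
      → 0 ≤ β := by
    intro hT
    by_contra hneg
    push_neg at hneg
    have h1β : (1:ℝ) < 1 - β := by linarith
    have hρ0 : 0 < 1 / (1 - β) := by positivity
    have hρ1 : 1 / (1 - β) < 1 := by
      rw [div_lt_one (by linarith)]; linarith
    rw [hDrw] at hT
    exact rv_not_lt_one hf_nonneg hρ0 hρ1 hRV hT
  -- item 2
  have item2 : ∀ c : ℝ, 0 < c →
      Tendsto (fun u => (g (1, α + u) - g (1, α)) / u) (𝓝[>] 0) (𝓝 c) → β = 0 := by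
    intro c hc hT
    rw [hDrw] at hT
    have hρ := rv_index_one hc hRV hT
    have hne : 1 - β ≠ 0 := by
      intro h0
      rw [h0, div_zero] at hρ
      norm_num at hρ
    rw [div_eq_one_iff_eq hne] at hρ
    linarith
  -- item 3
  have item3 : ∀ c : ℝ,
      Tendsto (fun u => (g (1, α + u) - g (1, α)) / u) (𝓝[>] 0) (𝓝 c) → 0 ≤ c := by
    intro c hT
    refine ge_of_tendsto hT ?_
    filter_upwards [self_mem_nhdsWithin] with u hu
    have h1 := hge u hu
    have hu0 : (0:ℝ) < u := hu
    exact div_nonneg (by rw [hα]; linarith) hu0.le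
  refine ⟨item1, item2, item3, ?_⟩
  -- item 4 : the one-sided derivative exists
  have hγ : HasDerivAt (fun u : ℝ => ((1:ℝ), α + u)) ((0:ℝ), (1:ℝ)) 0 :=
    (hasDerivAt_const (x := (0:ℝ)) (c := (1:ℝ))).prodMk ((hasDerivAt_id 0).const_add α)
  have hdiff : DifferentiableAt ℝ gu (1, α) := hcu.differentiableAt one_ne_zero
  have hF : HasFDerivAt gu (fderiv ℝ gu (1, α)) (1, α) := hdiff.hasFDerivAt
  have hF' : HasFDerivAt gu (fderiv ℝ gu (1, α)) ((fun u : ℝ => ((1:ℝ), α + u)) 0) := by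
    simpa using hF
  set c : ℝ := fderiv ℝ gu (1, α) (0, 1) with hc
  have hD : HasDerivAt (fun u : ℝ => gu (1, α + u)) c 0 := by
    have := hF'.comp_hasDerivAt 0 hγ
    exact this
  have hslope : Tendsto (slope (fun u : ℝ => gu (1, α + u)) 0) (𝓝[≠] 0) (𝓝 c) :=
    hasDerivAt_iff_tendsto_slope.mp hD
  have hmono : (𝓝[>] (0:ℝ)) ≤ 𝓝[≠] (0:ℝ) :=
    nhdsWithin_mono 0 fun x hx => ne_of_gt hx
  have hslope' : Tendsto (slope (fun u : ℝ => gu (1, α + u)) 0) (𝓝[>] 0) (𝓝 c) :=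
    hslope.mono_left hmono
  -- g = gu along the curve for u ≥ 0 near 0
  have hγc : Tendsto (fun u : ℝ => ((1:ℝ), α + u)) (𝓝 0) (𝓝 ((1:ℝ), α)) := by
    have : ContinuousAt (fun u : ℝ => ((1:ℝ), α + u)) 0 :=
      (continuousAt_const).prodMk (continuousAt_const.add continuousAt_id)
    simpa using this.tendsto
  have hevu : ∀ᶠ u in 𝓝 (0:ℝ), α * 1 ≤ α + u → g (1, α + u) = gu (1, α + u) := by
    have := hγc.eventually hev
    simpa using this
  have hgu_eq : gu (1, α) = 1 := by
    have h0 := hevu.self_of_nhds (by simp)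
    simp only [add_zero] at h0
    rw [← h0, hα]
  have hTc : Tendsto (fun u => (g (1, α + u) - g (1, α)) / u) (𝓝[>] 0) (𝓝 c) := by
    refine hslope'.congr' ?_
    filter_upwards [self_mem_nhdsWithin, eventually_nhdsWithin_of_eventually_nhds hevu]
      with u hu hgeq
    have hu0 : (0:ℝ) < u := hu
    have hgu : g (1, α + u) = gu (1, α + u) := hgeq (by linarith [mul_one α])
    rw [slope_def_field]
    simp only [add_zero, sub_zero]
    rw [hα, hgu_eq, hgu]
  have hc0 : 0 ≤ c := item3 c hTc
  refine ⟨c, hc0, hTc, ?_⟩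
  rcases hc0.lt_or_eq with hlt | heq
  · exact le_of_eq (item2 c hlt hTc).symm
  · exact item1 (by rw [← heq] at hTc; exact hTc)

/-- Proposition 6 of the paper: for a limit set whose gauge function `g` is
piecewise continuously differentiable (near the points of interest it agrees with two
`1`-homogeneous `C¹` pieces on either side of the relevant ray), with `g(1,α₁) = 1` and
`u ↦ g(1, α₁+u) - 1 ∈ RV⁰_{1/(1-β₁)}`: the one-sided derivative
`g₂(1,(α₁)₊) = lim_{u→0⁺}(g(1,α₁+u) - g(1,α₁))/u` is nonnegative whenever it exists,
(i) if it is `0` then `β₁ ≥ 0`; (ii) if it is finite and positive then `β₁ = 0`; and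
if `α₁ > 0` then it exists, is finite and nonnegative, so that `β₁ ≥ 0`.
The analogous statements hold for `α₂, β₂`. -/
theorem condExtremes_beta_sign
    (g : ℝ × ℝ → ℝ) (hg_cont : Continuous g)
    (hg_homog : ∀ t : ℝ, 0 < t → ∀ p : ℝ × ℝ, g (t • p) = t * g p)
    (hg_ge_max : ∀ p : ℝ × ℝ, 0 ≤ p.1 → 0 ≤ p.2 → max p.1 p.2 ≤ g p)
    -- the point (1, α₁) on the unit level set; g piecewise-C¹ near (1, α₁)
    (α₁ : ℝ) (hα₁0 : 0 ≤ α₁) (hα₁ : g (1, α₁) = 1)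
    (hpiece₁ : ∃ gl gu : ℝ × ℝ → ℝ,
      (∀ t : ℝ, 0 < t → ∀ p : ℝ × ℝ, gl (t • p) = t * gl p) ∧
      (∀ t : ℝ, 0 < t → ∀ p : ℝ × ℝ, gu (t • p) = t * gu p) ∧
      ContDiffAt ℝ 1 gl (1, α₁) ∧ ContDiffAt ℝ 1 gu (1, α₁) ∧
      (∀ᶠ p : ℝ × ℝ in 𝓝 (1, α₁),
        (p.2 ≤ α₁ * p.1 → g p = gl p) ∧ (α₁ * p.1 ≤ p.2 → g p = gu p)))
    (β₁ : ℝ) (hβ₁ : β₁ ≤ 1)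
    (hRV₁ : RegVaryingAtZero (fun u => g (1, α₁ + u) - 1) (1 / (1 - β₁)))
    -- the point (α₂, 1) on the unit level set; g piecewise-C¹ near (α₂, 1)
    (α₂ : ℝ) (hα₂0 : 0 ≤ α₂) (hα₂ : g (α₂, 1) = 1)
    (hpiece₂ : ∃ gl gu : ℝ × ℝ → ℝ,
      (∀ t : ℝ, 0 < t → ∀ p : ℝ × ℝ, gl (t • p) = t * gl p) ∧
      (∀ t : ℝ, 0 < t → ∀ p : ℝ × ℝ, gu (t • p) = t * gu p) ∧
      ContDiffAt ℝ 1 gl (α₂, 1) ∧ ContDiffAt ℝ 1 gu (α₂, 1) ∧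
      (∀ᶠ p : ℝ × ℝ in 𝓝 (α₂, 1),
        (p.1 ≤ α₂ * p.2 → g p = gl p) ∧ (α₂ * p.2 ≤ p.1 → g p = gu p)))
    (β₂ : ℝ) (hβ₂ : β₂ ≤ 1)
    (hRV₂ : RegVaryingAtZero (fun u => g (α₂ + u, 1) - 1) (1 / (1 - β₂))) :
    (((Tendsto (fun u => (g (1, α₁ + u) - g (1, α₁)) / u) (𝓝[>] 0) (𝓝 0) → 0 ≤ β₁) ∧
      (∀ c : ℝ, 0 < c →
        Tendsto (fun u => (g (1, α₁ + u) - g (1, α₁)) / u) (𝓝[>] 0) (𝓝 c) → β₁ = 0) ∧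
      (∀ c : ℝ,
        Tendsto (fun u => (g (1, α₁ + u) - g (1, α₁)) / u) (𝓝[>] 0) (𝓝 c) → 0 ≤ c) ∧
      (0 < α₁ → ∃ c : ℝ, 0 ≤ c ∧
        Tendsto (fun u => (g (1, α₁ + u) - g (1, α₁)) / u) (𝓝[>] 0) (𝓝 c) ∧ 0 ≤ β₁))) ∧
    (((Tendsto (fun u => (g (α₂ + u, 1) - g (α₂, 1)) / u) (𝓝[>] 0) (𝓝 0) → 0 ≤ β₂) ∧
      (∀ c : ℝ, 0 < c →
        Tendsto (fun u => (g (α₂ + u, 1) - g (α₂, 1)) / u) (𝓝[>] 0) (𝓝 c) → β₂ = 0) ∧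
      (∀ c : ℝ,
        Tendsto (fun u => (g (α₂ + u, 1) - g (α₂, 1)) / u) (𝓝[>] 0) (𝓝 c) → 0 ≤ c) ∧
      (0 < α₂ → ∃ c : ℝ, 0 ≤ c ∧
        Tendsto (fun u => (g (α₂ + u, 1) - g (α₂, 1)) / u) (𝓝[>] 0) (𝓝 c) ∧ 0 ≤ β₂))) := by
  obtain ⟨gl₁, gu₁, -, -, -, hcu₁, hev₁⟩ := hpiece₁
  obtain ⟨gl₂, gu₂, -, -, -, hcu₂, hev₂⟩ := hpiece₂
  constructor
  · have h := main_coord g α₁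
      (fun u hu => le_trans (le_max_left 1 (α₁ + u))
        (hg_ge_max (1, α₁ + u) zero_le_one (show (0:ℝ) ≤ α₁ + u by linarith)))
      hα₁ gu₁ hcu₁ (hev₁.mono fun p hp => hp.2) β₁ hβ₁ hRV₁
    exact ⟨h.1, h.2.1, h.2.2.1, fun _ => h.2.2.2⟩
  · have hswt : Tendsto (fun p : ℝ × ℝ => (p.2, p.1)) (𝓝 ((1:ℝ), α₂)) (𝓝 (α₂, (1:ℝ))) :=
      (continuous_snd.prodMk continuous_fst).continuousAt
    have h := main_coord (fun p : ℝ × ℝ => g (p.2, p.1)) α₂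
      (fun u hu => le_trans (le_max_right (α₂ + u) 1)
        (hg_ge_max (α₂ + u, 1) (show (0:ℝ) ≤ α₂ + u by linarith) zero_le_one))
      hα₂ (fun p : ℝ × ℝ => gu₂ (p.2, p.1))
      (hcu₂.comp ((1:ℝ), α₂) (contDiff_snd.prodMk contDiff_fst).contDiffAt)
      ((hswt.eventually hev₂).mono fun p hp => hp.2)
      β₂ hβ₂ hRV₂
    exact ⟨h.1, h.2.1, h.2.2.1, fun _ => h.2.2.2⟩
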